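/- (Theorem 1(iii)) Suppose X_1, …, X_n affinely span ℝ^d. Then the composite similarity mapping h : Θ_n → ℝ^d, h(θ) = θ̃ + (1 + l(θ)/(2n))(θ − θ̃), is a bijection from Θ_n onto all of ℝ^d. -/

import Mathlib

noncomputable section

/-- The set of empirical likelihood weight vectors for `θ`:
`W(θ) = {w : wᵢ ≥ 0, Σ wᵢ = 1, Σ wᵢ Xᵢ = θ}`. -/
def Wset (n d : ℕ) (X : Fin n → EuclideanSpace ℝ (Fin d))
    (θ : EuclideanSpace ℝ (Fin d)) : Set (Fin n → ℝ) :=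
  {w | (∀ i, 0 ≤ w i) ∧ ∑ i, w i = 1 ∧ ∑ i, w i • X i = θ}

/-- The empirical likelihood ratio `R(θ) = sup {∏ n·wᵢ : w ∈ W(θ)}` (the sup over
the empty set is `0`, since `Real.sSup ∅ = 0`). -/
def elR (n d : ℕ) (X : Fin n → EuclideanSpace ℝ (Fin d))
    (θ : EuclideanSpace ℝ (Fin d)) : ℝ :=
  sSup ((fun w => ∏ i, (n : ℝ) * w i) '' Wset n d X θ)

/-- The empirical log-likelihood ratio `l(θ) = -2 log R(θ)`. -/
def elln (n d : ℕ) (X : Fin n → EuclideanSpace ℝ (Fin d))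
    (θ : EuclideanSpace ℝ (Fin d)) : ℝ :=
  -2 * Real.log (elR n d X θ)

/-- The sample mean `θ̃ = n⁻¹ Σ Xᵢ`. -/
def sampleMean (n d : ℕ) (X : Fin n → EuclideanSpace ℝ (Fin d)) :
    EuclideanSpace ℝ (Fin d) :=
  (n : ℝ)⁻¹ • ∑ i, X i

/-- The composite similarity mapping `h(θ) = θ̃ + (1 + l(θ)/(2n))(θ - θ̃)`. -/
def csm (n d : ℕ) (X : Fin n → EuclideanSpace ℝ (Fin d))
    (θ : EuclideanSpace ℝ (Fin d)) : EuclideanSpace ℝ (Fin d) :=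
  sampleMean n d X + (1 + elln n d X θ / (2 * n)) • (θ - sampleMean n d X)

namespace EL

variable {n d : ℕ} {X : Fin n → EuclideanSpace ℝ (Fin d)}

lemma weight_le_one {w : Fin n → ℝ} (h0 : ∀ i, 0 ≤ w i) (h1 : ∑ i, w i = 1) (i : Fin n) :
    w i ≤ 1 := by
  rw [← h1]
  exact Finset.single_le_sum (fun j _ => h0 j) (Finset.mem_univ i)

lemma elP_le_one {w : Fin n → ℝ} (h0 : ∀ i, 0 ≤ w i) (h1 : ∑ i, w i = 1) :
    ∏ i, (n : ℝ) * w i ≤ 1 := by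
  have hn : 0 < n := by
    rcases Nat.eq_zero_or_pos n with h | h
    · subst h; simp at h1
    · exact h
  by_cases hz : ∃ i, w i = 0
  · obtain ⟨i, hi⟩ := hz
    rw [Finset.prod_eq_zero (Finset.mem_univ i) (by simp [hi])]
    norm_num
  · push_neg at hz
    have hpos : ∀ i, 0 < w i := fun i => (h0 i).lt_of_ne (Ne.symm (hz i))
    have hnn : (0:ℝ) < n := Nat.cast_pos.mpr hn
    calc ∏ i, (n:ℝ) * w i = Real.exp (∑ i, Real.log ((n:ℝ) * w i)) := by
          rw [Real.exp_sum]
          exact Finset.prod_congr rfl fun i _ =>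
            (Real.exp_log (by have := hpos i; positivity)).symm
      _ ≤ Real.exp (∑ i, ((n:ℝ) * w i - 1)) := by
          apply Real.exp_le_exp.mpr
          apply Finset.sum_le_sum
          intro i _
          exact Real.log_le_sub_one_of_pos (by have := hpos i; positivity)
      _ = 1 := by
          rw [Finset.sum_sub_distrib, ← Finset.mul_sum, h1]
          simp

lemma bddAbove_elP (θ : EuclideanSpace ℝ (Fin d)) :
    BddAbove ((fun w => ∏ i, (n : ℝ) * w i) '' Wset n d X θ) :=
  ⟨1, by rintro x ⟨w, hw, rfl⟩; exact elP_le_one hw.1 hw.2.1⟩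

lemma elR_le_one {θ : EuclideanSpace ℝ (Fin d)} (hne : (Wset n d X θ).Nonempty) :
    elR n d X θ ≤ 1 :=
  csSup_le (hne.image _) (by rintro x ⟨w, hw, rfl⟩; exact elP_le_one hw.1 hw.2.1)

lemma elR_ge {θ : EuclideanSpace ℝ (Fin d)} {w : Fin n → ℝ} (hw : w ∈ Wset n d X θ) :
    ∏ i, (n : ℝ) * w i ≤ elR n d X θ :=
  le_csSup (bddAbove_elP θ) ⟨w, hw, rfl⟩

lemma mem_hull_iff {x : EuclideanSpace ℝ (Fin d)} :
    x ∈ convexHull ℝ (Set.range X) ↔ (Wset n d X x).Nonempty := by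
  constructor
  · intro hx
    rw [convexHull_range_eq_exists_affineCombination] at hx
    obtain ⟨s, w, h0, h1, hx⟩ := hx
    refine ⟨fun i => if i ∈ s then w i else 0, fun i => ?_, ?_, ?_⟩
    · dsimp only; split_ifs with h
      exacts [h0 _ h, le_rfl]
    · show ∑ i, (if i ∈ s then w i else 0) = 1
      rw [Finset.sum_ite_mem, Finset.univ_inter, h1]
    · show ∑ i, (if i ∈ s then w i else 0) • X i = x
      rw [← hx, s.affineCombination_eq_linear_combination X w h1]
      rw [show (∑ i, (if i ∈ s then w i else 0) • X i)
          = ∑ i, (if i ∈ s then w i • X i else 0) from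
        Finset.sum_congr rfl fun i _ => by split_ifs <;> simp]
      rw [Finset.sum_ite_mem, Finset.univ_inter]
  · rintro ⟨w, h0, h1, hx⟩
    have := Finset.centerMass_mem_convexHull (Finset.univ : Finset (Fin n))
      (w := w) (z := X) (fun i _ => h0 i) (by rw [h1]; norm_num)
      (fun i _ => Set.mem_range_self i)
    rwa [Finset.centerMass_eq_of_sum_1 _ _ h1, hx] at this



end EL

namespace EL

variable {n d : ℕ} {X : Fin n → EuclideanSpace ℝ (Fin d)}

lemma uniform_mem_Wset (hn : 0 < n) :
    (fun _ : Fin n => (n : ℝ)⁻¹) ∈ Wset n d X (sampleMean n d X) := by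
  have hnn : ((n:ℝ)) ≠ 0 := Nat.cast_ne_zero.mpr hn.ne'
  refine ⟨fun i => by positivity, ?_, ?_⟩
  · simp [Finset.sum_const, mul_inv_cancel₀ hnn]
  · rw [sampleMean, Finset.smul_sum]

lemma sampleMean_mem_hull (hn : 0 < n) :
    sampleMean n d X ∈ convexHull ℝ (Set.range X) :=
  mem_hull_iff.mpr ⟨_, uniform_mem_Wset hn⟩

lemma sampleMean_mem_interior (hn : 0 < n)
    (hspan : (interior (convexHull ℝ (Set.range X))).Nonempty) :
    sampleMean n d X ∈ interior (convexHull ℝ (Set.range X)) := by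
  obtain ⟨p, hp⟩ := hspan
  obtain ⟨lam, hl0, hl1, hlp⟩ := mem_hull_iff.mp (interior_subset hp)
  have hnn : (0:ℝ) < n := Nat.cast_pos.mpr hn
  set ε : ℝ := (2 * n)⁻¹ with hε
  have hε0 : 0 < ε := by positivity
  have hε1 : ε < 1 := by
    rw [hε]
    rw [inv_lt_one_iff₀]
    right
    have : (1:ℝ) ≤ n := Nat.one_le_cast.mpr hn
    nlinarith
  set μ : Fin n → ℝ := fun i => ((n:ℝ)⁻¹ - ε * lam i) / (1 - ε) with hμ
  have h1ε : (0:ℝ) < 1 - ε := by linarith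
  have hμ0 : ∀ i, 0 ≤ μ i := by
    intro i
    apply div_nonneg _ h1ε.le
    have hle : lam i ≤ 1 := weight_le_one hl0 hl1 i
    have : ε * lam i ≤ ε := by nlinarith [hl0 i]
    have hεn : ε ≤ (n:ℝ)⁻¹ := by
      rw [hε]
      apply inv_anti₀ hnn
      nlinarith
    linarith
  have hμ1 : ∑ i, μ i = 1 := by
    have hsum : ∑ i, ((n:ℝ)⁻¹ - ε * lam i) = 1 - ε := by
      rw [Finset.sum_sub_distrib, ← Finset.mul_sum, hl1, Finset.sum_const]
      simp [Finset.card_univ, nsmul_eq_mul, mul_inv_cancel₀ hnn.ne']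
    rw [hμ]
    rw [← Finset.sum_div, hsum, div_self h1ε.ne']
  set q : EuclideanSpace ℝ (Fin d) := ∑ i, μ i • X i with hq
  have hqK : q ∈ convexHull ℝ (Set.range X) := mem_hull_iff.mpr ⟨μ, hμ0, hμ1, rfl⟩
  have hcombo : ε • p + (1 - ε) • q = sampleMean n d X := by
    rw [hq, ← hlp, Finset.smul_sum, Finset.smul_sum, ← Finset.sum_add_distrib]
    rw [sampleMean, Finset.smul_sum]
    refine Finset.sum_congr rfl fun i _ => ?_
    rw [smul_smul, smul_smul, ← add_smul, hμ]
    congr 1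
    field_simp
    ring
  rw [← hcombo]
  exact (convex_convexHull ℝ _).combo_interior_self_mem_interior hp hqK hε0
    (by linarith) (by ring)

end EL

namespace EL

variable {n d : ℕ} {X : Fin n → EuclideanSpace ℝ (Fin d)}

lemma exists_pos_weights (hn : 0 < n) {θ : EuclideanSpace ℝ (Fin d)}
    (hθ : θ ∈ interior (convexHull ℝ (Set.range X))) :
    ∃ w ∈ Wset n d X θ, ∀ i, 0 < w i := by
  have hnn : (0:ℝ) < n := Nat.cast_pos.mpr hn
  set m := sampleMean n d X with hm
  obtain ⟨r, hr0, hball⟩ := Metric.isOpen_iff.mp isOpen_interior θ hθ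
  set t : ℝ := r / (2 * (‖θ - m‖ + 1)) with ht
  have ht0 : 0 < t := by positivity
  have hθ' : θ + t • (θ - m) ∈ convexHull ℝ (Set.range X) := by
    apply interior_subset
    apply hball
    rw [Metric.mem_ball, dist_eq_norm]
    have : θ + t • (θ - m) - θ = t • (θ - m) := by abel
    rw [this, norm_smul, Real.norm_eq_abs, abs_of_pos ht0]
    have h1 : ‖θ - m‖ < ‖θ - m‖ + 1 := by linarith
    calc t * ‖θ - m‖ ≤ t * (‖θ - m‖ + 1) := by nlinarith [norm_nonneg (θ - m)]
      _ = r / 2 := by rw [ht]; field_simp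
      _ < r := by linarith
  obtain ⟨lam, hl0, hl1, hlθ'⟩ := mem_hull_iff.mp hθ'
  set w : Fin n → ℝ := fun i => (1 + t)⁻¹ * lam i + (t / (1 + t)) * (n:ℝ)⁻¹ with hw
  have h1t : (0:ℝ) < 1 + t := by linarith
  refine ⟨w, ⟨fun i => ?_, ?_, ?_⟩, fun i => ?_⟩
  · have := hl0 i; positivity
  · rw [hw]
    simp only
    rw [Finset.sum_add_distrib, ← Finset.mul_sum, hl1, ← Finset.mul_sum, Finset.sum_const]
    simp only [Finset.card_univ, Fintype.card_fin, nsmul_eq_mul]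
    rw [mul_inv_cancel₀ hnn.ne']
    field_simp
  · rw [hw]
    simp only
    have hexp : ∀ i : Fin n, ((1 + t)⁻¹ * lam i + t / (1 + t) * (n:ℝ)⁻¹) • X i
        = (1 + t)⁻¹ • (lam i • X i) + (t / (1 + t)) • ((n:ℝ)⁻¹ • X i) := by
      intro i
      rw [add_smul, smul_smul, smul_smul]
    rw [Finset.sum_congr rfl fun i _ => hexp i, Finset.sum_add_distrib,
      ← Finset.smul_sum, ← Finset.smul_sum, hlθ']
    have hmean : ∑ i, (n:ℝ)⁻¹ • X i = m := by
      rw [hm, sampleMean, Finset.smul_sum]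
    rw [hmean]
    rw [smul_add, smul_smul]
    -- goal: (1+t)⁻¹ • θ + (1+t)⁻¹ • (t • (θ - m)) + (t/(1+t)) • m = θ
    have : (1 + t)⁻¹ • θ + ((1 + t)⁻¹ * t) • (θ - m) + (t / (1 + t)) • m = θ := by
      rw [smul_sub]
      rw [show ((1:ℝ) + t)⁻¹ * t = t / (1 + t) by ring]
      rw [show (1 + t)⁻¹ • θ + ((t / (1 + t)) • θ - (t / (1 + t)) • m) + (t / (1 + t)) • m
          = ((1 + t)⁻¹ + t / (1 + t)) • θ by rw [add_smul]; abel]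
      rw [show ((1:ℝ) + t)⁻¹ + t / (1 + t) = 1 by field_simp]
      rw [one_smul]
    exact this
  · have := hl0 i
    have h2 : 0 < t / (1 + t) * (n:ℝ)⁻¹ := by positivity
    have h3 : 0 ≤ (1 + t)⁻¹ * lam i := by positivity
    show 0 < (1 + t)⁻¹ * lam i + t / (1 + t) * (n:ℝ)⁻¹
    linarith

lemma elR_pos (hn : 0 < n) {θ : EuclideanSpace ℝ (Fin d)}
    (hθ : θ ∈ interior (convexHull ℝ (Set.range X))) :
    0 < elR n d X θ := by
  obtain ⟨w, hw, hpos⟩ := exists_pos_weights hn hθ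
  have hnn : (0:ℝ) < n := Nat.cast_pos.mpr hn
  have : 0 < ∏ i, (n:ℝ) * w i :=
    Finset.prod_pos fun i _ => by have := hpos i; positivity
  exact lt_of_lt_of_le this (elR_ge hw)

lemma elln_nonneg (hn : 0 < n) {θ : EuclideanSpace ℝ (Fin d)}
    (hθ : θ ∈ interior (convexHull ℝ (Set.range X))) :
    0 ≤ elln n d X θ := by
  rw [elln]
  have h1 : elR n d X θ ≤ 1 := elR_le_one (mem_hull_iff.mp (interior_subset hθ))
  have hlog : Real.log (elR n d X θ) ≤ 0 := Real.log_nonpos (elR_pos hn hθ).le h1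
  linarith

lemma elR_sampleMean (hn : 0 < n) : elR n d X (sampleMean n d X) = 1 := by
  have hnn : (0:ℝ) < n := Nat.cast_pos.mpr hn
  apply le_antisymm (elR_le_one ⟨_, uniform_mem_Wset hn⟩)
  have := elR_ge (X := X) (uniform_mem_Wset (d := d) hn)
  rwa [Finset.prod_congr rfl (fun (i : Fin n) _ => mul_inv_cancel₀ hnn.ne'),
    Finset.prod_const_one] at this

lemma elln_sampleMean (hn : 0 < n) : elln n d X (sampleMean n d X) = 0 := by
  rw [elln, elR_sampleMean hn, Real.log_one, mul_zero]

end EL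

namespace EL

variable {n d : ℕ} {X : Fin n → EuclideanSpace ℝ (Fin d)}

lemma isClosed_Wset (θ : EuclideanSpace ℝ (Fin d)) : IsClosed (Wset n d X θ) := by
  have h1 : IsClosed {w : Fin n → ℝ | ∀ i, 0 ≤ w i} := by
    have : {w : Fin n → ℝ | ∀ i, 0 ≤ w i} = ⋂ i, {w | 0 ≤ w i} := by
      ext w; simp
    rw [this]
    exact isClosed_iInter fun i => isClosed_le continuous_const (continuous_apply i)
  have h2 : IsClosed {w : Fin n → ℝ | ∑ i, w i = 1} :=
    isClosed_eq (by continuity) continuous_const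
  have h3 : IsClosed {w : Fin n → ℝ | ∑ i, w i • X i = θ} :=
    isClosed_eq (continuous_finset_sum _ fun i _ => (continuous_apply i).smul continuous_const)
      continuous_const
  have heq : Wset n d X θ
      = ({w : Fin n → ℝ | ∀ i, 0 ≤ w i} ∩ {w | ∑ i, w i = 1}) ∩ {w | ∑ i, w i • X i = θ} := by
    ext w; simp only [Wset, Set.mem_setOf_eq, Set.mem_inter_iff, and_assoc]
  rw [heq]
  exact (h1.inter h2).inter h3

lemma isCompact_Wset (θ : EuclideanSpace ℝ (Fin d)) : IsCompact (Wset n d X θ) := by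
  apply IsCompact.of_isClosed_subset (isCompact_Icc (a := (0 : Fin n → ℝ)) (b := 1))
    (isClosed_Wset θ)
  intro w hw
  constructor
  · intro i; exact hw.1 i
  · intro i; exact weight_le_one hw.1 hw.2.1 i

lemma continuous_elP : Continuous (fun w : Fin n → ℝ => ∏ i, (n:ℝ) * w i) :=
  continuous_finset_prod _ fun i _ => continuous_const.mul (continuous_apply i)

lemma exists_maximizer {θ : EuclideanSpace ℝ (Fin d)} (hne : (Wset n d X θ).Nonempty) :
    ∃ w ∈ Wset n d X θ, elR n d X θ = ∏ i, (n:ℝ) * w i := by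
  obtain ⟨w, hw, hmax⟩ := (isCompact_Wset θ).exists_isMaxOn hne continuous_elP.continuousOn
  refine ⟨w, hw, ?_⟩
  apply IsGreatest.csSup_eq
  exact ⟨⟨w, hw, rfl⟩, by rintro x ⟨v, hv, rfl⟩; exact hmax hv⟩

end EL

namespace EL

variable {n d : ℕ} {X : Fin n → EuclideanSpace ℝ (Fin d)}

lemma amgm2 {a b p q : ℝ} (ha : 0 ≤ a) (hb : 0 ≤ b) (hab : a + b = 1)
    (hp : 0 ≤ p) (hq : 0 ≤ q) : p ^ a * q ^ b ≤ a * p + b * q := by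
  have := Real.geom_mean_le_arith_mean_weighted Finset.univ ![a, b] ![p, q]
    (by intro i _; fin_cases i <;> assumption)
    (by simp [Fin.sum_univ_two, hab]) (by intro i _; fin_cases i <;> assumption)
  simpa [Fin.prod_univ_two, Fin.sum_univ_two] using this

lemma combo_mem_Wset {θ₀ θ₁ : EuclideanSpace ℝ (Fin d)} {w₀ w₁ : Fin n → ℝ}
    (h₀ : w₀ ∈ Wset n d X θ₀) (h₁ : w₁ ∈ Wset n d X θ₁) {a b : ℝ}
    (ha : 0 ≤ a) (hb : 0 ≤ b) (hab : a + b = 1) :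
    (fun i => a * w₀ i + b * w₁ i) ∈ Wset n d X (a • θ₀ + b • θ₁) := by
  refine ⟨fun i => add_nonneg (mul_nonneg ha (h₀.1 i)) (mul_nonneg hb (h₁.1 i)), ?_, ?_⟩
  · rw [Finset.sum_add_distrib, ← Finset.mul_sum, ← Finset.mul_sum, h₀.2.1, h₁.2.1]
    simpa using hab
  · show ∑ i, (a * w₀ i + b * w₁ i) • X i = _
    rw [Finset.sum_congr rfl (fun i _ => by
      rw [add_smul, mul_smul, mul_smul] :
      ∀ i ∈ Finset.univ, (a * w₀ i + b * w₁ i) • X i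
        = a • (w₀ i • X i) + b • (w₁ i • X i))]
    rw [Finset.sum_add_distrib, ← Finset.smul_sum, ← Finset.smul_sum, h₀.2.2, h₁.2.2]

lemma elR_combo_ge (hn : 0 < n) {θ₀ θ₁ : EuclideanSpace ℝ (Fin d)}
    (h₀ : θ₀ ∈ interior (convexHull ℝ (Set.range X)))
    (h₁ : θ₁ ∈ interior (convexHull ℝ (Set.range X)))
    {a b : ℝ} (ha : 0 ≤ a) (hb : 0 ≤ b) (hab : a + b = 1) :
    elR n d X θ₀ ^ a * elR n d X θ₁ ^ b ≤ elR n d X (a • θ₀ + b • θ₁) := by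
  obtain ⟨w₀, hw₀, hR₀⟩ := exists_maximizer (mem_hull_iff.mp (interior_subset h₀))
  obtain ⟨w₁, hw₁, hR₁⟩ := exists_maximizer (mem_hull_iff.mp (interior_subset h₁))
  have hnn : (0:ℝ) ≤ n := Nat.cast_nonneg n
  have key : ∀ i : Fin n, ((n:ℝ) * w₀ i) ^ a * ((n:ℝ) * w₁ i) ^ b
      ≤ (n:ℝ) * (a * w₀ i + b * w₁ i) := by
    intro i
    have := amgm2 ha hb hab (mul_nonneg hnn (hw₀.1 i)) (mul_nonneg hnn (hw₁.1 i))
    calc ((n:ℝ) * w₀ i) ^ a * ((n:ℝ) * w₁ i) ^ b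
        ≤ a * ((n:ℝ) * w₀ i) + b * ((n:ℝ) * w₁ i) := this
      _ = (n:ℝ) * (a * w₀ i + b * w₁ i) := by ring
  calc elR n d X θ₀ ^ a * elR n d X θ₁ ^ b
      = ∏ i, ((n:ℝ) * w₀ i) ^ a * ((n:ℝ) * w₁ i) ^ b := by
        rw [hR₀, hR₁,
          ← Real.finset_prod_rpow _ _ (fun i _ => mul_nonneg hnn (hw₀.1 i)) a,
          ← Real.finset_prod_rpow _ _ (fun i _ => mul_nonneg hnn (hw₁.1 i)) b,
          ← Finset.prod_mul_distrib]
    _ ≤ ∏ i, (n:ℝ) * (a * w₀ i + b * w₁ i) := by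
        apply Finset.prod_le_prod
        · intro i _
          exact mul_nonneg (Real.rpow_nonneg (mul_nonneg hnn (hw₀.1 i)) a)
            (Real.rpow_nonneg (mul_nonneg hnn (hw₁.1 i)) b)
        · intro i _; exact key i
    _ ≤ elR n d X (a • θ₀ + b • θ₁) := elR_ge (combo_mem_Wset hw₀ hw₁ ha hb hab)

lemma elln_convexOn (hn : 0 < n) :
    ConvexOn ℝ (interior (convexHull ℝ (Set.range X))) (elln n d X) := by
  refine ⟨(convex_convexHull ℝ _).interior, ?_⟩
  intro x hx y hy a b ha hb hab
  have hcombo : a • x + b • y ∈ interior (convexHull ℝ (Set.range X)) :=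
    (convex_convexHull ℝ _).interior hx hy ha hb hab
  have hRx := elR_pos hn hx
  have hRy := elR_pos hn hy
  have hkey := elR_combo_ge hn hx hy ha hb hab
  have hpow : 0 < elR n d X x ^ a * elR n d X y ^ b :=
    mul_pos (Real.rpow_pos_of_pos hRx a) (Real.rpow_pos_of_pos hRy b)
  have hlog : Real.log (elR n d X x ^ a * elR n d X y ^ b)
      ≤ Real.log (elR n d X (a • x + b • y)) :=
    Real.log_le_log hpow hkey
  rw [Real.log_mul (Real.rpow_pos_of_pos hRx a).ne' (Real.rpow_pos_of_pos hRy b).ne',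
    Real.log_rpow hRx, Real.log_rpow hRy] at hlog
  show elln n d X (a • x + b • y) ≤ a • elln n d X x + b • elln n d X y
  simp only [elln, smul_eq_mul]
  nlinarith [hlog]

lemma elln_continuousOn (hn : 0 < n) :
    ContinuousOn (elln n d X) (interior (convexHull ℝ (Set.range X))) :=
  (elln_convexOn hn).continuousOn isOpen_interior

end EL

namespace EL

variable {n d : ℕ} {X : Fin n → EuclideanSpace ℝ (Fin d)}

lemma csm_sub (θ : EuclideanSpace ℝ (Fin d)) :
    csm n d X θ - sampleMean n d X
      = (1 + elln n d X θ / (2 * n)) • (θ - sampleMean n d X) := by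
  rw [csm, add_sub_cancel_left]

lemma one_le_coef (hn : 0 < n) {θ : EuclideanSpace ℝ (Fin d)}
    (hθ : θ ∈ interior (convexHull ℝ (Set.range X))) :
    1 ≤ 1 + elln n d X θ / (2 * n) := by
  have h1 := elln_nonneg hn hθ
  have hnn : (0:ℝ) < n := Nat.cast_pos.mpr hn
  have : 0 ≤ elln n d X θ / (2 * n) := by positivity
  linarith

lemma ray_repr {σ : ℝ} (θ m : EuclideanSpace ℝ (Fin d)) :
    m + σ • (θ - m) = (1 - σ) • m + σ • θ := by
  rw [smul_sub, sub_smul, one_smul]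
  abel

lemma elln_ray_le (hn : 0 < n)
    (hspan : (interior (convexHull ℝ (Set.range X))).Nonempty)
    {θ : EuclideanSpace ℝ (Fin d)} (hθ : θ ∈ interior (convexHull ℝ (Set.range X)))
    {σ : ℝ} (h0 : 0 ≤ σ) (h1 : σ ≤ 1) :
    elln n d X (sampleMean n d X + σ • (θ - sampleMean n d X)) ≤ σ * elln n d X θ := by
  have hm := sampleMean_mem_interior hn hspan
  have := (elln_convexOn (X := X) hn).2 hm hθ (by linarith : (0:ℝ) ≤ 1 - σ) h0 (by ring)
  rw [elln_sampleMean hn] at this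
  rw [ray_repr]
  simpa using this

lemma ray_mem (hn : 0 < n)
    (hspan : (interior (convexHull ℝ (Set.range X))).Nonempty)
    {θ : EuclideanSpace ℝ (Fin d)} (hθ : θ ∈ interior (convexHull ℝ (Set.range X)))
    {σ : ℝ} (h0 : 0 ≤ σ) (h1 : σ ≤ 1) :
    sampleMean n d X + σ • (θ - sampleMean n d X) ∈ interior (convexHull ℝ (Set.range X)) := by
  rw [ray_repr]
  exact (convex_convexHull ℝ _).interior (sampleMean_mem_interior hn hspan) hθ
    (by linarith) h0 (by ring)

lemma coef_arith {σ lu lv N : ℝ} (hN : 0 < N) (hσ0 : 0 < σ) (hσ1 : σ < 1)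
    (hu0 : 0 ≤ lu) (hle : lv ≤ σ * lu)
    (hcontra : 1 + lu / N = σ * (1 + lv / N)) : False := by
  have ha : 0 ≤ lu / N := div_nonneg hu0 hN.le
  have hb : lv / N ≤ σ * (lu / N) := by
    rw [← mul_div_assoc]
    exact div_le_div_of_nonneg_right hle hN.le
  have hσσ : σ * σ ≤ 1 := by nlinarith
  have h1 : σ * (lv / N) ≤ σ * (σ * (lu / N)) := mul_le_mul_of_nonneg_left hb hσ0.le
  have h2 : σ * (σ * (lu / N)) ≤ lu / N := by nlinarith
  have hexp : σ * (1 + lv / N) = σ + σ * (lv / N) := by ring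
  linarith

lemma csm_injOn (hn : 0 < n)
    (hspan : (interior (convexHull ℝ (Set.range X))).Nonempty) :
    Set.InjOn (csm n d X) (interior (convexHull ℝ (Set.range X))) := by
  intro x hx y hy hxy
  set m := sampleMean n d X with hm
  set cx := 1 + elln n d X x / (2 * n) with hcx
  set cy := 1 + elln n d X y / (2 * n) with hcy
  have hcx1 : 1 ≤ cx := one_le_coef hn hx
  have hcy1 : 1 ≤ cy := one_le_coef hn hy
  have heq : cx • (x - m) = cy • (y - m) := by
    have h1 : csm n d X x - m = cx • (x - m) := csm_sub x
    have h2 : csm n d X y - m = cy • (y - m) := csm_sub y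
    rw [← h1, ← h2, hxy]
  have hnn : (0:ℝ) < n := Nat.cast_pos.mpr hn
  have hN : (0:ℝ) < 2 * n := by positivity
  have key : ∀ u v : EuclideanSpace ℝ (Fin d),
      u ∈ interior (convexHull ℝ (Set.range X)) →
      v ∈ interior (convexHull ℝ (Set.range X)) → ∀ σ : ℝ, 0 < σ → σ < 1 →
      v - m = σ • (u - m) →
      ¬ ((1 + elln n d X u / (2 * n)) = σ * (1 + elln n d X v / (2 * n))) := by
    intro u v hu hv σ hσ0 hσ1 hvu hcontra
    have hvray : v = m + σ • (u - m) := by rw [← hvu]; abel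
    have hle : elln n d X v ≤ σ * elln n d X u := by
      rw [hvray]; exact elln_ray_le hn hspan hu hσ0.le hσ1.le
    exact coef_arith hN hσ0 hσ1 (elln_nonneg hn hu) hle hcontra
  by_cases hxm : x = m
  · subst hxm
    rw [sub_self, smul_zero] at heq
    have hcy0 : cy ≠ 0 := by linarith
    have : y - m = 0 := (smul_eq_zero.mp heq.symm).resolve_left hcy0
    rw [sub_eq_zero] at this
    rw [this]
  · by_cases hym : y = m
    · subst hym
      rw [sub_self, smul_zero] at heq
      have hcx0 : cx ≠ 0 := by linarith
      have : x - m = 0 := (smul_eq_zero.mp heq).resolve_left hcx0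
      rw [sub_eq_zero] at this
      exact absurd this hxm
    · have hcy0 : (0:ℝ) < cy := by linarith
      have hcx0 : (0:ℝ) < cx := by linarith
      set σ := cy⁻¹ * cx with hσ
      have hσ0 : 0 < σ := by positivity
      have hyx : y - m = σ • (x - m) := by
        calc y - m = (cy⁻¹ * cy) • (y - m) := by
              rw [inv_mul_cancel₀ hcy0.ne', one_smul]
          _ = cy⁻¹ • (cy • (y - m)) := by rw [mul_smul]
          _ = cy⁻¹ • (cx • (x - m)) := by rw [← heq]
          _ = σ • (x - m) := by rw [← mul_smul]
      have hcxσ : cx = σ * cy := by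
        rw [hσ]; field_simp
      rcases lt_trichotomy σ 1 with h | h | h
      · exact absurd hcxσ (key x y hx hy σ hσ0 h hyx)
      · rw [h, one_smul] at hyx
        exact (sub_left_inj.mp hyx).symm
      · have hxy' : x - m = σ⁻¹ • (y - m) := by
          rw [hyx, smul_smul, inv_mul_cancel₀ hσ0.ne', one_smul]
        have hσinv0 : 0 < σ⁻¹ := by positivity
        have hσinv1 : σ⁻¹ < 1 := by
          rw [inv_lt_one_iff₀]; right; exact h
        have hcyσ : cy = σ⁻¹ * cx := by
          rw [hcxσ, inv_mul_cancel_left₀ hσ0.ne']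
        exact absurd hcyσ (key y x hy hx σ⁻¹ hσinv0 hσinv1 hxy')

end EL

namespace EL

variable {n d : ℕ} {X : Fin n → EuclideanSpace ℝ (Fin d)}

lemma csm_fix : csm n d X (sampleMean n d X) = sampleMean n d X := by
  rw [csm, sub_self, smul_zero, add_zero]

lemma csm_ray (s : ℝ) (u : EuclideanSpace ℝ (Fin d)) :
    csm n d X (sampleMean n d X + s • u)
      = sampleMean n d X
        + ((1 + elln n d X (sampleMean n d X + s • u) / (2 * n)) * s) • u := by
  rw [csm, add_sub_cancel_left, smul_smul]

lemma ray_mem_of_le (hn : 0 < n)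
    (hspan : (interior (convexHull ℝ (Set.range X))).Nonempty)
    {u : EuclideanSpace ℝ (Fin d)} {s t : ℝ} (ht : 0 ≤ t) (hts : t ≤ s)
    (hs : sampleMean n d X + s • u ∈ interior (convexHull ℝ (Set.range X))) :
    sampleMean n d X + t • u ∈ interior (convexHull ℝ (Set.range X)) := by
  rcases eq_or_lt_of_le (ht.trans hts) with hs0 | hs0
  · have ht0 : t = 0 := le_antisymm (hts.trans hs0.symm.le) ht
    rw [ht0, zero_smul, add_zero]
    exact sampleMean_mem_interior hn hspan
  · have hσ : sampleMean n d X + t • u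
        = sampleMean n d X + (t / s) • ((sampleMean n d X + s • u) - sampleMean n d X) := by
      rw [add_sub_cancel_left, smul_smul, div_mul_cancel₀ _ hs0.ne']
    rw [hσ]
    exact ray_mem hn hspan hs (div_nonneg ht hs0.le) (div_le_one_of_le₀ hts hs0.le)

lemma hull_subset_closure_interior
    (hspan : (interior (convexHull ℝ (Set.range X))).Nonempty) :
    convexHull ℝ (Set.range X) ⊆ closure (interior (convexHull ℝ (Set.range X))) := by
  obtain ⟨p, hp⟩ := hspan
  intro x hx
  rw [Metric.mem_closure_iff]
  intro ε hε
  set t : ℝ := min 1 (ε / (2 * (dist p x + 1))) with htdef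
  have hdpx : (0:ℝ) < dist p x + 1 := by positivity
  have ht0 : 0 < t := lt_min one_pos (by positivity)
  have ht1 : t ≤ 1 := min_le_left _ _
  refine ⟨t • p + (1 - t) • x, ?_, ?_⟩
  · exact (convex_convexHull ℝ _).combo_interior_self_mem_interior hp hx ht0
      (by linarith) (by ring)
  · have hxz : (t • p + (1 - t) • x) - x = t • (p - x) := by
      rw [sub_smul, one_smul, smul_sub]
      abel
    rw [dist_comm, dist_eq_norm, hxz, norm_smul, Real.norm_eq_abs, abs_of_pos ht0]
    have hnorm : ‖p - x‖ = dist p x := (dist_eq_norm p x).symm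
    rw [hnorm]
    have ht2 : t ≤ ε / (2 * (dist p x + 1)) := min_le_right _ _
    have h3 : t * dist p x ≤ (ε / (2 * (dist p x + 1))) * dist p x :=
      mul_le_mul_of_nonneg_right ht2 dist_nonneg
    have h4 : (ε / (2 * (dist p x + 1))) * dist p x < ε := by
      rw [div_mul_eq_mul_div, div_lt_iff₀ (by positivity)]
      nlinarith [dist_nonneg (x := p) (y := x)]
    linarith

end EL

namespace EL

variable {n d : ℕ} {X : Fin n → EuclideanSpace ℝ (Fin d)}

lemma log_to_l {R N b : ℝ} (hlog : Real.log R ≤ -(2*N/b)) :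
    4*N/b ≤ -2*Real.log R := by
  have h : 4*N/b = 2*(2*N/b) := by ring
  linarith

lemma final_arith {s b L N : ℝ} (hN : 0 < N) (hb : 0 < b) (hs : b/2 ≤ s) (hL : 0 ≤ L)
    (h4 : 4*N/b ≤ L) : 1 ≤ s * (1 + L / (2*N)) := by
  have h2N : (0:ℝ) < 2*N := by linarith
  have h4N : 4*N ≤ L*b := (div_le_iff₀ hb).mp h4
  have hprod : (b/2)*(2*N+L) ≤ s*(2*N+L) :=
    mul_le_mul_of_nonneg_right hs (by linarith)
  have key2 : 2*N ≤ s*(2*N+L) := by nlinarith [mul_pos hb hN]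
  have hrw : s * (1 + L/(2*N)) = s*(2*N+L)/(2*N) := by
    field_simp
  rw [hrw, le_div_iff₀ h2N]
  linarith

lemma exists_param_ge_one (hn : 0 < n)
    (hspan : (interior (convexHull ℝ (Set.range X))).Nonempty)
    (u : EuclideanSpace ℝ (Fin d)) :
    ∃ s₁ : ℝ, 0 < s₁ ∧ sampleMean n d X + s₁ • u ∈ interior (convexHull ℝ (Set.range X)) ∧
      1 ≤ s₁ * (1 + elln n d X (sampleMean n d X + s₁ • u) / (2 * n)) := by
  have hnn : (0:ℝ) < n := Nat.cast_pos.mpr hn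
  have hmΘ := sampleMean_mem_interior (X := X) hn hspan
  by_cases hfar : ∃ s : ℝ, 1 ≤ s ∧
      sampleMean n d X + s • u ∈ interior (convexHull ℝ (Set.range X))
  · obtain ⟨s, hs1, hsΘ⟩ := hfar
    have h1 : sampleMean n d X + (1:ℝ) • u ∈ interior (convexHull ℝ (Set.range X)) :=
      ray_mem_of_le hn hspan zero_le_one hs1 hsΘ
    refine ⟨1, one_pos, h1, ?_⟩
    rw [one_mul]
    exact one_le_coef hn h1
  · push_neg at hfar
    set B : Set ℝ := {s : ℝ | 0 ≤ s ∧
      sampleMean n d X + s • u ∈ interior (convexHull ℝ (Set.range X))} with hB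
    have h0B : (0:ℝ) ∈ B := ⟨le_rfl, by simpa using hmΘ⟩
    have hBbdd : BddAbove B := by
      refine ⟨1, fun s hs => ?_⟩
      by_contra h
      push_neg at h
      exact hfar s h.le hs.2
    set b := sSup B with hb
    obtain ⟨r, hr0, hball⟩ := Metric.isOpen_iff.mp isOpen_interior _ hmΘ
    have hεmem : ∀ ε : ℝ, 0 ≤ ε → ε * ‖u‖ < r → ε ∈ B := by
      intro ε hε0 hεr
      refine ⟨hε0, hball ?_⟩
      rw [Metric.mem_ball, dist_eq_norm, add_sub_cancel_left, norm_smul, Real.norm_eq_abs,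
        abs_of_nonneg hε0]
      exact hεr
    have hε0B : r / (2 * (‖u‖ + 1)) ∈ B := by
      apply hεmem _ (by positivity)
      calc r / (2 * (‖u‖ + 1)) * ‖u‖ ≤ r / (2 * (‖u‖ + 1)) * (‖u‖ + 1) := by
            apply mul_le_mul_of_nonneg_left (by linarith) (by positivity)
        _ = r / 2 := by field_simp
        _ < r := by linarith
    have hbpos : 0 < b := lt_of_lt_of_le (by positivity) (le_csSup hBbdd hε0B)
    have hmemlt : ∀ s : ℝ, 0 ≤ s → s < b →
        sampleMean n d X + s • u ∈ interior (convexHull ℝ (Set.range X)) := by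
      intro s h0 hsb
      obtain ⟨s', hs'B, hss'⟩ := exists_lt_of_lt_csSup ⟨0, h0B⟩ hsb
      exact ray_mem_of_le hn hspan h0 hss'.le hs'B.2
    have hbnot : sampleMean n d X + b • u ∉ interior (convexHull ℝ (Set.range X)) := by
      intro hmem
      obtain ⟨r', hr'0, hball'⟩ := Metric.isOpen_iff.mp isOpen_interior _ hmem
      set ε' := r' / (2 * (‖u‖ + 1)) with hε'
      have hε'0 : 0 < ε' := by positivity
      have hmem' : sampleMean n d X + (b + ε') • u ∈ interior (convexHull ℝ (Set.range X)) := by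
        apply hball'
        rw [Metric.mem_ball, dist_eq_norm]
        have hdd : sampleMean n d X + (b + ε') • u - (sampleMean n d X + b • u) = ε' • u := by
          rw [add_smul]; abel
        rw [hdd, norm_smul, Real.norm_eq_abs, abs_of_pos hε'0]
        calc ε' * ‖u‖ ≤ ε' * (‖u‖ + 1) := by nlinarith [norm_nonneg u]
          _ = r' / 2 := by rw [hε']; field_simp
          _ < r' := by linarith
      have hBmem : b + ε' ∈ B := ⟨by positivity, hmem'⟩
      have := le_csSup hBbdd hBmem
      linarith
    have hbK : sampleMean n d X + b • u ∈ convexHull ℝ (Set.range X) := by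
      have hcl : IsClosed (convexHull ℝ (Set.range X)) :=
        ((Set.finite_range X).isCompact_convexHull (𝕜 := ℝ)).isClosed
      rw [← hcl.closure_eq, Metric.mem_closure_iff]
      intro ε hε
      set s' := max 0 (b - ε / (2 * (‖u‖ + 1))) with hs'
      have hs'0 : 0 ≤ s' := le_max_left _ _
      have hs'b : s' < b := by
        apply max_lt hbpos
        have : 0 < ε / (2 * (‖u‖ + 1)) := by positivity
        linarith
      refine ⟨sampleMean n d X + s' • u, interior_subset (hmemlt s' hs'0 hs'b), ?_⟩
      rw [dist_eq_norm]
      have hdiff : sampleMean n d X + b • u - (sampleMean n d X + s' • u) = (b - s') • u := by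
        rw [sub_smul]; abel
      rw [hdiff, norm_smul, Real.norm_eq_abs, abs_of_pos (by linarith : (0:ℝ) < b - s')]
      have hbs : b - s' ≤ ε / (2 * (‖u‖ + 1)) := by
        have h5 := le_max_right (0:ℝ) (b - ε / (2 * (‖u‖ + 1)))
        rw [hs']
        have h6 : b - ε / (2 * (‖u‖ + 1)) ≤ max 0 (b - ε / (2 * (‖u‖ + 1))) := le_max_right _ _
        linarith
      calc (b - s') * ‖u‖ ≤ (ε / (2 * (‖u‖ + 1))) * (‖u‖ + 1) := by
            apply mul_le_mul hbs (by linarith) (norm_nonneg u) (by positivity)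
        _ = ε / 2 := by field_simp
        _ < ε := by linarith
    obtain ⟨f, hf⟩ := geometric_hahn_banach_open_point
      ((convex_convexHull ℝ _).interior) isOpen_interior hbnot
    have hfK : ∀ x ∈ convexHull ℝ (Set.range X), f x ≤ f (sampleMean n d X + b • u) := by
      intro x hx
      have hcls : closure (interior (convexHull ℝ (Set.range X)))
          ⊆ {z | f z ≤ f (sampleMean n d X + b • u)} :=
        closure_minimal (fun z hz => (hf z hz).le)
          (isClosed_le f.continuous continuous_const)
      exact hcls (hull_subset_closure_interior hspan hx)
    have hc : ∀ i, f (X i) ≤ f (sampleMean n d X + b • u) :=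
      fun i => hfK _ (subset_convexHull ℝ _ (Set.mem_range_self i))
    have hex : ∃ j, f (X j) < f (sampleMean n d X + b • u) := by
      by_contra h
      push_neg at h
      have hall : ∀ j, f (X j) = f (sampleMean n d X + b • u) :=
        fun j => le_antisymm (hc j) (h j)
      have hKset : convexHull ℝ (Set.range X)
          ⊆ {z | f z = f (sampleMean n d X + b • u)} := by
        apply convexHull_min
        · rintro z ⟨j, rfl⟩; exact hall j
        · exact convex_hyperplane ⟨f.map_add, f.map_smul⟩ _
      obtain ⟨p, hp⟩ := hspan
      exact absurd (hKset (interior_subset hp)) (ne_of_lt (hf p hp))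
    obtain ⟨j, hj⟩ := hex
    have hcj0 : 0 < f (sampleMean n d X + b • u) - f (X j) := sub_pos.mpr hj
    clear_value b
    have hRbound : ∀ s : ℝ, 0 ≤ s → s < b →
        elR n d X (sampleMean n d X + s • u)
          ≤ (b - s) * ((n:ℝ)^n * f u / (f (sampleMean n d X + b • u) - f (X j))) := by
      intro s h0 hsb
      have hsΘ := hmemlt s h0 hsb
      apply csSup_le ((mem_hull_iff.mp (interior_subset hsΘ)).image _)
      rintro x ⟨w, hw, rfl⟩
      have h1 : ∑ i, w i * f (X i) = f (sampleMean n d X + s • u) := by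
        rw [← hw.2.2, map_sum]
        exact Finset.sum_congr rfl fun i _ => by rw [f.map_smul, smul_eq_mul]
      have hsum : ∑ i, w i * (f (sampleMean n d X + b • u) - f (X i)) = (b - s) * f u := by
        have h2 : ∑ i, w i * (f (sampleMean n d X + b • u) - f (X i))
            = (∑ i, w i) * f (sampleMean n d X + b • u) - ∑ i, w i * f (X i) := by
          rw [Finset.sum_mul, ← Finset.sum_sub_distrib]
          exact Finset.sum_congr rfl fun i _ => by ring
        rw [h2, hw.2.1, one_mul, h1]
        have h3 : f (sampleMean n d X + b • u) - f (sampleMean n d X + s • u)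
            = (b - s) * f u := by
          rw [f.map_add, f.map_add, f.map_smul, f.map_smul, smul_eq_mul, smul_eq_mul]
          ring
        rw [h3]
      have hwj : w j * (f (sampleMean n d X + b • u) - f (X j)) ≤ (b - s) * f u := by
        rw [← hsum]
        exact Finset.single_le_sum
          (fun i _ => mul_nonneg (hw.1 i) (sub_nonneg.mpr (hc i))) (Finset.mem_univ j)
      have hwj' : w j ≤ (b - s) * f u / (f (sampleMean n d X + b • u) - f (X j)) :=
        (le_div_iff₀ hcj0).mpr hwj
      have hpow : (n:ℝ)^(n-1) * (n:ℝ) = (n:ℝ)^n := by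
        rw [← pow_succ, Nat.sub_add_cancel hn]
      calc ∏ i, (n:ℝ) * w i
          = ((n:ℝ) * w j) * ∏ i ∈ Finset.univ.erase j, ((n:ℝ) * w i) :=
            (Finset.mul_prod_erase _ _ (Finset.mem_univ j)).symm
        _ ≤ ((n:ℝ) * w j) * ∏ i ∈ Finset.univ.erase j, (n:ℝ) := by
            apply mul_le_mul_of_nonneg_left ?_ (mul_nonneg hnn.le (hw.1 j))
            apply Finset.prod_le_prod (fun i _ => mul_nonneg hnn.le (hw.1 i))
            intro i _
            nlinarith [weight_le_one hw.1 hw.2.1 i]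
        _ = (n:ℝ)^n * w j := by
            rw [Finset.prod_const, Finset.card_erase_of_mem (Finset.mem_univ j),
              Finset.card_univ, Fintype.card_fin, ← hpow]
            ring
        _ ≤ (n:ℝ)^n * ((b - s) * f u / (f (sampleMean n d X + b • u) - f (X j))) :=
            mul_le_mul_of_nonneg_left hwj' (by positivity)
        _ = (b - s) * ((n:ℝ)^n * f u / (f (sampleMean n d X + b • u) - f (X j))) := by
            ring
    set M' := max ((n:ℝ)^n * f u / (f (sampleMean n d X + b • u) - f (X j))) 1 with hM'
    have hM'1 : (1:ℝ) ≤ M' := le_max_right _ _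
    have hM'0 : (0:ℝ) < M' := lt_of_lt_of_le one_pos hM'1
    have hMle : (n:ℝ)^n * f u / (f (sampleMean n d X + b • u) - f (X j)) ≤ M' :=
      le_max_left _ _
    clear_value M'
    set δ := min (b/2) (Real.exp (-(2*(n:ℝ)/b)) / M') with hδ
    have hδ0 : 0 < δ := lt_min (by linarith) (div_pos (Real.exp_pos _) hM'0)
    have hδb2 : δ ≤ b/2 := min_le_left _ _
    have hδ2 : δ ≤ Real.exp (-(2*(n:ℝ)/b)) / M' := min_le_right _ _
    clear_value δ
    set s := b - δ with hs
    clear_value s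
    have hs0 : 0 < s := by rw [hs]; linarith
    have hsb : s < b := by rw [hs]; linarith
    have hsΘ := hmemlt s hs0.le hsb
    have hR := hRbound s hs0.le hsb
    have hRpos := elR_pos hn hsΘ
    have hbsδ : b - s = δ := by rw [hs]; ring
    have hbb : (b - s) * ((n:ℝ)^n * f u / (f (sampleMean n d X + b • u) - f (X j)))
        ≤ δ * M' := by
      rw [hbsδ]
      exact mul_le_mul_of_nonneg_left hMle hδ0.le
    have hδM : δ * M' ≤ Real.exp (-(2*(n:ℝ)/b)) := by
      calc δ * M' ≤ (Real.exp (-(2*(n:ℝ)/b)) / M') * M' :=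
            mul_le_mul_of_nonneg_right hδ2 hM'0.le
        _ = Real.exp (-(2*(n:ℝ)/b)) := div_mul_cancel₀ _ hM'0.ne'
    have hRle : elR n d X (sampleMean n d X + s • u) ≤ Real.exp (-(2*(n:ℝ)/b)) :=
      le_trans hR (le_trans hbb hδM)
    have hlog : Real.log (elR n d X (sampleMean n d X + s • u)) ≤ -(2*(n:ℝ)/b) := by
      have := Real.log_le_log hRpos hRle
      rwa [Real.log_exp] at this
    have hl : 4*(n:ℝ)/b ≤ elln n d X (sampleMean n d X + s • u) := by
      rw [elln]
      exact log_to_l hlog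
    have hsge : b/2 ≤ s := by rw [hs]; linarith
    exact ⟨s, hs0, hsΘ, final_arith hnn hbpos hsge (elln_nonneg hn hsΘ) hl⟩

end EL

namespace EL

variable {n d : ℕ} {X : Fin n → EuclideanSpace ℝ (Fin d)}

lemma csm_surjOn (hn : 0 < n)
    (hspan : (interior (convexHull ℝ (Set.range X))).Nonempty) :
    Set.SurjOn (csm n d X) (interior (convexHull ℝ (Set.range X))) Set.univ := by
  intro y _
  by_cases hym : y = sampleMean n d X
  · exact ⟨sampleMean n d X, sampleMean_mem_interior hn hspan, by rw [csm_fix, hym]⟩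
  · obtain ⟨s₁, hs₁0, hs₁Θ, hs₁g⟩ := exists_param_ge_one hn hspan (y - sampleMean n d X)
    have hmaps : Set.MapsTo (fun s : ℝ => sampleMean n d X + s • (y - sampleMean n d X))
        (Set.Icc 0 s₁) (interior (convexHull ℝ (Set.range X))) :=
      fun s hs => ray_mem_of_le hn hspan hs.1 hs.2 hs₁Θ
    have hline : Continuous (fun s : ℝ => sampleMean n d X + s • (y - sampleMean n d X)) := by
      continuity
    have hgc : ContinuousOn
        (fun s : ℝ => s * (1 + elln n d X
          (sampleMean n d X + s • (y - sampleMean n d X)) / (2*(n:ℝ))))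
        (Set.Icc 0 s₁) := by
      apply ContinuousOn.mul continuousOn_id
      apply ContinuousOn.add continuousOn_const
      exact ((elln_continuousOn hn).comp hline.continuousOn hmaps).div_const _
    have h1mem : (1:ℝ) ∈ Set.Icc
        ((fun s : ℝ => s * (1 + elln n d X
          (sampleMean n d X + s • (y - sampleMean n d X)) / (2*(n:ℝ)))) 0)
        ((fun s : ℝ => s * (1 + elln n d X
          (sampleMean n d X + s • (y - sampleMean n d X)) / (2*(n:ℝ)))) s₁) := by
      constructor
      · simp
      · exact hs₁g
    obtain ⟨s, hsI, hgs⟩ := intermediate_value_Icc hs₁0.le hgc h1mem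
    refine ⟨sampleMean n d X + s • (y - sampleMean n d X), hmaps hsI, ?_⟩
    rw [csm_ray]
    have hone : ((1 + elln n d X (sampleMean n d X + s • (y - sampleMean n d X))
        / (2 * (n:ℝ))) * s) = 1 := by
      rw [mul_comm]
      exact hgs
    rw [hone, one_smul]
    abel

end EL

/-- Theorem 1(iii): The composite similarity mapping `h` is a bijection
from `Θₙ` onto all of `ℝᵈ`. -/


theorem stmt8 (n d : ℕ) (hn : 0 < n) (hd : 0 < d)
    (X : Fin n → EuclideanSpace ℝ (Fin d))
    (hspan : (interior (convexHull ℝ (Set.range X))).Nonempty) :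
    Set.BijOn (csm n d X) (interior (convexHull ℝ (Set.range X))) Set.univ :=
  ⟨fun _ _ => Set.mem_univ _, EL.csm_injOn hn hspan, EL.csm_surjOn hn hspan⟩
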